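/- The Schur complement of a connected graph Laplacian onto a nonempty vertex subset T is itself a graph Laplacian: it is symmetric, has zero row sums, and has nonpositive off-diagonal entries. -/

import Mathlib

open Matrix Finset

/-- The Laplacian of the weighted graph with weights `w`. -/
def lapOf {V : Type*} [Fintype V] [DecidableEq V] (w : V → V → ℝ) : Matrix V V ℝ :=
  Matrix.of fun u v => if u = v then ∑ x, w u x else -(w u v)

/-- The Schur complement of `L` onto the vertex set `T`:
`L_TT − L_TF L_FF⁻¹ L_FT`, where `F = V ∖ T`. -/
noncomputable def schurOnto {V : Type*} [Fintype V] [DecidableEq V]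
    (L : Matrix V V ℝ) (T : Set V) [DecidablePred (· ∈ T)] :
    Matrix {a // a ∈ T} {a // a ∈ T} ℝ :=
  L.toBlock (· ∈ T) (· ∈ T) -
    L.toBlock (· ∈ T) (¬ · ∈ T) * (L.toBlock (¬ · ∈ T) (¬ · ∈ T))⁻¹ *
      L.toBlock (¬ · ∈ T) (· ∈ T)

section Aux

variable {V : Type*} [Fintype V] [DecidableEq V]

/-- The Laplacian applied to a vector, expressed as a sum over edges. -/
lemma lapOf_mulVec (w : V → V → ℝ) (hw_diag : ∀ u, w u u = 0) (z : V → ℝ) (i : V) :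
    (lapOf w).mulVec z i = ∑ v, w i v * (z i - z v) := by
  have h : ∀ v : V, (lapOf w) i v * z v
      = (if i = v then (∑ x, w i x) * z i else 0) + (-(w i v)) * z v := by
    intro v
    simp only [lapOf, of_apply]
    split
    · next h => subst h; rw [hw_diag]; ring
    · ring
  simp only [mulVec, dotProduct]
  rw [Finset.sum_congr rfl fun v _ => h v, Finset.sum_add_distrib,
    Finset.sum_ite_eq univ i (fun _ => (∑ x, w i x) * z i)]
  simp only [mem_univ, if_true]
  rw [Finset.sum_mul]
  rw [← Finset.sum_add_distrib]
  exact Finset.sum_congr rfl fun v _ => by ring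

lemma lapOf_mulVec_one (w : V → V → ℝ) (hw_diag : ∀ u, w u u = 0) :
    (lapOf w).mulVec (fun _ => (1 : ℝ)) = 0 := by
  funext i
  rw [show ((fun _ => (1:ℝ)) : V → ℝ) = (fun v => (fun _ => (1:ℝ)) v) from rfl]
  rw [lapOf_mulVec w hw_diag]
  simp

/-- Maximum principle: a vector vanishing on nonempty `T` whose Laplacian image is
nonnegative off `T` is itself nonnegative. -/
lemma lap_max_principle (w : V → V → ℝ) (hw_sym : ∀ u v, w u v = w v u)
    (hw_nonneg : ∀ u v, 0 ≤ w u v) (hw_diag : ∀ u, w u u = 0)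
    (hconn : ∀ x : V → ℝ, (lapOf w).mulVec x = 0 → ∃ c, ∀ i, x i = c)
    (T : Set V) (hT : T.Nonempty)
    (x : V → ℝ) (hx0 : ∀ v ∈ T, x v = 0)
    (hb : ∀ v, v ∉ T → 0 ≤ (lapOf w).mulVec x v) : ∀ v, 0 ≤ x v := by
  classical
  by_contra hcon
  push_neg at hcon
  obtain ⟨v0, hv0⟩ := hcon
  have hne : (Finset.univ : Finset V).Nonempty := ⟨v0, mem_univ _⟩
  obtain ⟨i, -, hmin⟩ := Finset.exists_min_image univ x hne
  set m := x i with hm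
  have hmlt : m < 0 := lt_of_le_of_lt (hmin v0 (mem_univ _)) hv0
  -- key: if x a = m then every neighbor v of a has x v = m
  have key : ∀ a : V, x a = m → ∀ v : V, w a v ≠ 0 → x v = m := by
    intro a ha v hwv
    have haT : a ∉ T := fun h => by rw [hx0 a h] at ha; exact absurd ha.symm (ne_of_lt hmlt)
    have h0 : 0 ≤ ∑ u, w a u * (x a - x u) := by
      have := hb a haT
      rwa [lapOf_mulVec w hw_diag] at this
    have hterm : ∀ u ∈ (univ : Finset V), w a u * (x a - x u) ≤ 0 := by
      intro u _
      exact mul_nonpos_of_nonneg_of_nonpos (hw_nonneg a u)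
        (by rw [ha]; linarith [hmin u (mem_univ u)])
    have hsum0 : ∑ u, w a u * (x a - x u) = 0 :=
      le_antisymm (Finset.sum_nonpos hterm) h0
    have heach := (Finset.sum_eq_zero_iff_of_nonpos hterm).mp hsum0 v (mem_univ v)
    rcases mul_eq_zero.mp heach with h | h
    · exact absurd h hwv
    · rw [ha] at h; linarith [h]
  -- the indicator of the min set is in the kernel of L
  set z : V → ℝ := fun v => if x v = m then 1 else 0 with hz
  have hker : (lapOf w).mulVec z = 0 := by
    funext a
    rw [lapOf_mulVec w hw_diag]
    simp only [Pi.zero_apply]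
    apply Finset.sum_eq_zero
    intro v _
    by_cases hwv : w a v = 0
    · rw [hwv]; ring
    by_cases ha : x a = m
    · have := key a ha v hwv
      simp only [hz, ha, this, if_true]
      ring
    · have hv : ¬ x v = m := by
        intro hv
        exact ha (key v hv a (fun h => hwv (by rw [hw_sym]; exact h)))
      simp only [hz, ha, hv, if_false]
      ring
  obtain ⟨c, hc⟩ := hconn z hker
  obtain ⟨t, ht⟩ := hT
  have h1 : z i = c := hc i
  have h2 : z t = c := hc t
  have hzi : z i = 1 := by simp only [hz]; exact if_pos hm.symm
  have hzt : z t = 0 := by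
    simp only [hz, hx0 t ht]
    rw [if_neg (by exact fun h => absurd h.symm (ne_of_lt hmlt))]
  rw [hzi] at h1; rw [hzt] at h2
  exact one_ne_zero (h1.trans h2.symm)

end Aux

/-- The Schur complement of a connected weighted graph Laplacian onto a nonempty subset
`T` (with `F = V ∖ T` nonempty) is itself a graph Laplacian: symmetric, zero row sums,
and nonpositive off-diagonal entries. -/
theorem schur_is_laplacian {V : Type*} [Fintype V] [DecidableEq V]
    (w : V → V → ℝ) (hw_sym : ∀ u v, w u v = w v u)
    (hw_nonneg : ∀ u v, 0 ≤ w u v) (hw_diag : ∀ u, w u u = 0)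
    (hconn : ∀ x : V → ℝ, (lapOf w).mulVec x = 0 → ∃ c, ∀ i, x i = c)
    (T : Set V) [DecidablePred (· ∈ T)]
    (hT : T.Nonempty) (hF : Tᶜ.Nonempty)
    (hFF : IsUnit ((lapOf w).toBlock (¬ · ∈ T) (¬ · ∈ T))) :
    ((schurOnto (lapOf w) T)ᵀ = schurOnto (lapOf w) T) ∧
    (∀ i, ∑ j, schurOnto (lapOf w) T i j = 0) ∧
    (∀ i j, i ≠ j → schurOnto (lapOf w) T i j ≤ 0) := by
  classical
  set L := lapOf w with hL
  have hLsym : Lᵀ = L := by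
    ext u v
    simp only [transpose_apply, hL, lapOf, of_apply]
    by_cases h : u = v
    · subst h; simp
    · rw [if_neg (fun hh => h hh.symm), if_neg h, hw_sym]
  set A := L.toBlock (· ∈ T) (· ∈ T) with hA
  set B := L.toBlock (· ∈ T) (¬ · ∈ T) with hB
  set C := L.toBlock (¬ · ∈ T) (¬ · ∈ T) with hC
  set D := L.toBlock (¬ · ∈ T) (· ∈ T) with hD
  have hdetC : IsUnit C.det := C.isUnit_iff_isUnit_det.mp hFF
  have hCCinv : C * C⁻¹ = 1 := mul_nonsing_inv C hdetC
  have hCinvC : C⁻¹ * C = 1 := nonsing_inv_mul C hdetC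
  have hLs : ∀ u v, L u v = L v u := fun u v => congrFun (congrFun hLsym v) u
  have hAsym : Aᵀ = A := by
    ext i j; exact hLs (j : V) (i : V)
  have hCsym : Cᵀ = C := by
    ext i j; exact hLs (j : V) (i : V)
  have hBD : Bᵀ = D := by
    ext i j; exact hLs (j : V) (i : V)
  have hDB : Dᵀ = B := by
    rw [← hBD, transpose_transpose]
  have hCinvSym : (C⁻¹)ᵀ = C⁻¹ := by
    rw [transpose_nonsing_inv, hCsym]
  -- entrywise nonnegativity of C⁻¹
  have hCinv_nonneg : ∀ i j, 0 ≤ C⁻¹ i j := by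
    intro i j
    set x : V → ℝ := fun v => if h : v ∈ T then 0 else C⁻¹ ⟨v, h⟩ j with hx
    have hx0 : ∀ v ∈ T, x v = 0 := fun v hv => by simp [hx, hv]
    have hbv : ∀ v, v ∉ T → 0 ≤ (lapOf w).mulVec x v := by
      intro v hv
      have : (lapOf w).mulVec x v = (C * C⁻¹) ⟨v, hv⟩ j := by
        rw [mul_apply]
        simp only [mulVec, dotProduct, ← hL]
        rw [← Fintype.sum_subtype_add_sum_subtype (· ∈ T) (fun u => L v u * x u)]
        have h1 : ∑ u : {a // a ∈ T}, L v (u : V) * x u = 0 := by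
          apply Finset.sum_eq_zero
          intro u _
          rw [hx0 u u.2, mul_zero]
        rw [h1, zero_add]
        apply Finset.sum_congr rfl
        intro u _
        simp only [hx, hC, toBlock_apply]
        rw [dif_neg u.2]
      rw [this, hCCinv]
      by_cases h : (⟨v, hv⟩ : {a // ¬ a ∈ T}) = j
      · rw [h]; simp
      · simp [Matrix.one_apply, h]
    have := lap_max_principle w hw_sym hw_nonneg hw_diag hconn T hT x hx0 hbv i
    have hxi : x (i : V) = C⁻¹ i j := by
      simp only [hx]
      rw [dif_neg i.2]
    rwa [hxi] at this
  refine ⟨?_, ?_, ?_⟩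
  · -- symmetry
    show (A - B * C⁻¹ * D)ᵀ = A - B * C⁻¹ * D
    rw [transpose_sub, hAsym, transpose_mul, transpose_mul, hCinvSym, hBD, hDB]
    rw [Matrix.mul_assoc]
  · -- zero row sums
    intro i
    have hLone : L.mulVec (fun _ => (1:ℝ)) = 0 := lapOf_mulVec_one w hw_diag
    -- block decomposition of L·1 on each part
    have hsplit : ∀ (p : V → Prop) [DecidablePred p] (v : {a // p a}),
        L.mulVec (fun _ => (1:ℝ)) (v : V) =
          (∑ u : {a // a ∈ T}, L (v : V) (u : V)) +
          (∑ u : {a // ¬ a ∈ T}, L (v : V) (u : V)) := by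
      intro p _ v
      simp only [mulVec, dotProduct, mul_one]
      rw [← Fintype.sum_subtype_add_sum_subtype (· ∈ T) (fun u => L (v : V) u)]
    have hFrow : ∀ v : {a // ¬ a ∈ T},
        (D.mulVec (fun _ => 1)) v + (C.mulVec (fun _ => 1)) v = 0 := by
      intro v
      have := hsplit (fun a => ¬ a ∈ T) v
      rw [hLone] at this
      simp only [Pi.zero_apply] at this
      simp only [mulVec, dotProduct, mul_one, hD, hC, toBlock_apply]
      linarith [this.symm]
    have hTrow : ∀ v : {a // a ∈ T},
        (A.mulVec (fun _ => 1)) v + (B.mulVec (fun _ => 1)) v = 0 := by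
      intro v
      have := hsplit (· ∈ T) v
      rw [hLone] at this
      simp only [Pi.zero_apply] at this
      simp only [mulVec, dotProduct, mul_one, hA, hB, toBlock_apply]
      linarith [this.symm]
    -- C⁻¹ · (D · 1) = -1
    have hDone : C.mulVec (fun _ => 1) = - D.mulVec (fun _ => 1) := by
      funext v
      have := hFrow v
      simp only [Pi.neg_apply]
      linarith
    have hCinvD : C⁻¹.mulVec (D.mulVec (fun _ => 1)) = fun _ => (-1 : ℝ) := by
      have h1 : C⁻¹.mulVec (C.mulVec (fun _ => (1:ℝ))) = fun _ => (1:ℝ) := by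
        rw [mulVec_mulVec, hCinvC, one_mulVec]
      rw [hDone] at h1
      funext v
      have := congrFun h1 v
      rw [mulVec_neg] at this
      simp only [Pi.neg_apply] at this
      have : -(C⁻¹.mulVec (D.mulVec fun _ => 1) v) = 1 := this
      linarith
    have hrow : ∑ j, schurOnto L T i j = ((A - B * C⁻¹ * D).mulVec (fun _ => 1)) i := by
      simp only [mulVec, dotProduct, mul_one]
      rfl
    rw [hrow, sub_mulVec]
    have : (B * C⁻¹ * D).mulVec (fun _ => 1) = B.mulVec (C⁻¹.mulVec (D.mulVec (fun _ => 1))) := by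
      rw [← mulVec_mulVec, ← mulVec_mulVec]
    rw [this, hCinvD]
    have hBneg : B.mulVec (fun _ => (-1:ℝ)) = - B.mulVec (fun _ => (1:ℝ)) := by
      funext v
      simp only [mulVec, dotProduct, Pi.neg_apply, mul_neg, mul_one]
      rw [← Finset.sum_neg_distrib]
    rw [hBneg]
    have := hTrow i
    simp only [Pi.sub_apply, Pi.neg_apply]
    linarith
  · -- nonpositive off-diagonal
    intro i j hij
    show A i j - (B * C⁻¹ * D) i j ≤ 0
    have hAij : A i j ≤ 0 := by
      have : (i : V) ≠ (j : V) := fun h => hij (Subtype.ext h)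
      simp only [hA, toBlock_apply, hL, lapOf, of_apply, if_neg this]
      simp [hw_nonneg]
    have hprod : 0 ≤ (B * C⁻¹ * D) i j := by
      rw [mul_apply]
      apply Finset.sum_nonneg
      intro l _
      rw [mul_apply]
      rw [Finset.sum_mul]
      apply Finset.sum_nonneg
      intro k _
      have hB' : B i k ≤ 0 := by
        have : (i : V) ≠ (k : V) := fun h => k.2 (h ▸ i.2)
        simp only [hB, toBlock_apply, hL, lapOf, of_apply, if_neg this]
        simp [hw_nonneg]
      have hD' : D l j ≤ 0 := by
        have : (l : V) ≠ (j : V) := fun h => l.2 (h ▸ j.2)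
        simp only [hD, toBlock_apply, hL, lapOf, of_apply, if_neg this]
        simp [hw_nonneg]
      have hc := hCinv_nonneg k l
      have h1 : 0 ≤ (-B i k) * C⁻¹ k l * (-D l j) :=
        mul_nonneg (mul_nonneg (neg_nonneg.2 hB') hc) (neg_nonneg.2 hD')
      have h2 : (-B i k) * C⁻¹ k l * (-D l j) = B i k * C⁻¹ k l * D l j := by ring
      linarith
    linarith
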